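/- Let A be a commutative integral domain with fraction field K. Let L be a finite-dimensional K-vector space with basis v_1, ..., v_r, and let N be an A-submodule of Hom(L, A) := {A-valued functionals} whose rank (dimension of N ⊗_A K over K) is k. Suppose θ_1, ..., θ_k ∈ N are such that the r × k matrix (θ_j(v_i)) over A has a nonzero k × k minor p. Then the localized module N ⊗_A A[p^{-1}] is a free A[p^{-1}]-module, and the images of θ_1, ..., θ_k form a basis: for every θ ∈ N there exist unique p_1, ..., p_k ∈ A with p·θ = Σ_{j=1}^k p_j θ_j. -/

import Mathlib

/-- Identify `Hom(L, A)` with `Fin r → A` via the basis `v₁, …, v_r`.  If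
`θ₁, …, θ_k ∈ N` have an `r × k` coefficient matrix with a nonzero `k × k` minor `p`,
and the rank of `N` is at most `k` (every `k+1` elements of `N` are `A`-linearly
dependent), then every `θ ∈ N` has a unique representation `p • θ = Σ pⱼ • θⱼ`;
in particular the localization `N[p⁻¹]` is free over `A[p⁻¹]` with basis the `θⱼ`. -/
theorem stmt7 {A : Type} [CommRing A] [IsDomain A]
    (r k : ℕ) (N : Submodule A (Fin r → A))
    (hrank : ∀ θ' : Fin (k + 1) → N, ∃ c : Fin (k + 1) → A, c ≠ 0 ∧
      ∑ j, c j • (θ' j : Fin r → A) = 0)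
    (θ : Fin k → N)
    (e : Fin k → Fin r) (he : Function.Injective e)
    (p : A) (hp : p = (Matrix.of fun i j => (θ j : Fin r → A) (e i)).det)
    (hp0 : p ≠ 0) :
    ∀ θ0 : N, ∃! c : Fin k → A,
      p • (θ0 : Fin r → A) = ∑ j, c j • (θ j : Fin r → A) := by
  intro θ0
  set M : Matrix (Fin k) (Fin k) A :=
    Matrix.of fun i j => (θ j : Fin r → A) (e i) with hMdef
  have hdet : M.det ≠ 0 := hp ▸ hp0
  -- If M.mulVec u = 0 then u = 0
  have key : ∀ u : Fin k → A, M.mulVec u = 0 → u = 0 := by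
    intro u hu
    have h1 : M.adjugate.mulVec (M.mulVec u) = M.det • u := by
      rw [Matrix.mulVec_mulVec, Matrix.adjugate_mul, Matrix.smul_mulVec,
        Matrix.one_mulVec]
    rw [hu, Matrix.mulVec_zero] at h1
    funext j
    have h2 := congrFun h1.symm j
    simp only [Pi.smul_apply, Pi.zero_apply, smul_eq_mul] at h2
    exact (mul_eq_zero.mp h2).resolve_left hdet
  -- If a combination of the θ j vanishes, the coefficients vanish
  have key2 : ∀ u : Fin k → A, ∑ j, u j • (θ j : Fin r → A) = 0 → u = 0 := by
    intro u hu
    apply key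
    funext i
    have := congrFun hu (e i)
    simp only [Finset.sum_apply, Pi.smul_apply, smul_eq_mul, Pi.zero_apply] at this
    simp only [Matrix.mulVec, dotProduct, Pi.zero_apply]
    rw [← this]
    exact Finset.sum_congr rfl fun j _ => mul_comm _ _
  -- dependence relation
  obtain ⟨c, hc0, hcsum⟩ := hrank (Fin.cons θ0 θ)
  rw [Fin.sum_univ_succ] at hcsum
  simp only [Fin.cons_zero, Fin.cons_succ] at hcsum
  have hc00 : c 0 ≠ 0 := by
    intro h0
    apply hc0
    have hrest : (fun j => c (Fin.succ j)) = 0 := by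
      apply key2
      rw [h0, zero_smul, zero_add] at hcsum
      exact hcsum
    funext i
    refine Fin.cases h0 (fun j => ?_) i
    exact congrFun hrest j
  set d : Fin k → A := fun j => -c j.succ with hd
  have hrel : c 0 • (θ0 : Fin r → A) = ∑ j, d j • (θ j : Fin r → A) := by
    have := hcsum
    rw [add_eq_zero_iff_eq_neg] at this
    rw [this, ← Finset.sum_neg_distrib]
    exact Finset.sum_congr rfl fun j _ => by rw [hd]; rw [neg_smul]
  set w : Fin k → A := fun i => (θ0 : Fin r → A) (e i) with hw
  have hMd : M.mulVec d = c 0 • w := by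
    funext i
    have := congrFun hrel (e i)
    simp only [Finset.sum_apply, Pi.smul_apply, smul_eq_mul] at this
    simp only [Matrix.mulVec, dotProduct, Pi.smul_apply, smul_eq_mul,
      hMdef, Matrix.of_apply]
    show ∑ x, (θ x : Fin r → A) (e i) * d x = c 0 * (θ0 : Fin r → A) (e i)
    rw [this]
    exact Finset.sum_congr rfl fun j _ => mul_comm _ _
  set q : Fin k → A := M.adjugate.mulVec w with hq
  have hMq : M.mulVec q = p • w := by
    rw [hq, Matrix.mulVec_mulVec, Matrix.mul_adjugate, Matrix.smul_mulVec,
      Matrix.one_mulVec, hp]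
  have hqd : c 0 • q = p • d := by
    have : M.mulVec (c 0 • q - p • d) = 0 := by
      rw [Matrix.mulVec_sub, Matrix.mulVec_smul, Matrix.mulVec_smul,
        hMq, hMd, smul_comm]
      simp
    have h := key _ this
    rwa [sub_eq_zero] at h
  have hex : p • (θ0 : Fin r → A) = ∑ j, q j • (θ j : Fin r → A) := by
    apply smul_right_injective (Fin r → A) hc00
    show c 0 • p • (θ0 : Fin r → A) = c 0 • ∑ j, q j • (θ j : Fin r → A)
    rw [smul_comm (c 0) p, hrel, Finset.smul_sum, Finset.smul_sum]
    refine Finset.sum_congr rfl fun j _ => ?_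
    rw [smul_smul, smul_smul]
    congr 1
    have := congrFun hqd j
    simp only [Pi.smul_apply, smul_eq_mul] at this
    rw [← this]
  refine ⟨q, hex, fun c' hc' => ?_⟩
  have : (fun j => c' j - q j) = 0 := by
    apply key2
    simp only [sub_smul, Finset.sum_sub_distrib]
    rw [← hc', ← hex, sub_self]
  funext j
  have := congrFun this j
  simpa [sub_eq_zero] using this
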